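/- arXiv:1810.04283 — 9 statements merged into one kernel-verified Lean document; each statement's English description precedes it below -/
import Mathlib

section
/- Let g_1,...,g_{2n}, g_N : [0,T) → ℝ be positive differentiable functions satisfying the ODE system g_i' = g_N/g_{i+n} - ρ g_i g_N Σ and g_{i+n}' = g_N/g_i - ρ g_{i+n} g_N Σ for 1 ≤ i ≤ n, and g_N' = -(1+ρ) g_N² Σ, where Σ = Σ_{k=1}^n 1/(g_k g_{k+n}). Then for each 1 ≤ i ≤ n, the ratio g_i(t)/g_{i+n}(t) is constant in t. -/
/-- Ricci-Bourguignon flow on the Heisenberg group `H_n` (diagonal metric):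
the ratios `g_i / g_{i+n}` are constant along the flow. -/
theorem heisenberg_RB_ratio_const (n : ℕ) (hn : 1 ≤ n) (T ρ : ℝ) (hT : 0 < T)
    (g : ℕ → ℝ → ℝ) (gN : ℝ → ℝ) (S : ℝ → ℝ)
    (hS : ∀ t, S t = ∑ k ∈ Finset.Icc 1 n, 1 / (g k t * g (k + n) t))
    (hpos : ∀ j ∈ Finset.Icc 1 (2 * n), ∀ t ∈ Set.Ico (0 : ℝ) T, 0 < g j t)
    (hposN : ∀ t ∈ Set.Ico (0 : ℝ) T, 0 < gN t)
    (hode1 : ∀ i ∈ Finset.Icc 1 n, ∀ t ∈ Set.Ico (0 : ℝ) T,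
      HasDerivAt (g i) (gN t / g (i + n) t - ρ * g i t * gN t * S t) t)
    (hode2 : ∀ i ∈ Finset.Icc 1 n, ∀ t ∈ Set.Ico (0 : ℝ) T,
      HasDerivAt (g (i + n)) (gN t / g i t - ρ * g (i + n) t * gN t * S t) t)
    (hodeN : ∀ t ∈ Set.Ico (0 : ℝ) T,
      HasDerivAt gN (-(1 + ρ) * (gN t) ^ 2 * S t) t) :
    ∀ i ∈ Finset.Icc 1 n, ∀ t ∈ Set.Ico (0 : ℝ) T,
      g i t / g (i + n) t = g i 0 / g (i + n) 0 := by
  intro i hi t ht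
  simp only [Finset.mem_Icc] at hi
  have hi1 : i ∈ Finset.Icc 1 (2 * n) := by simp only [Finset.mem_Icc]; omega
  have hi2 : i + n ∈ Finset.Icc 1 (2 * n) := by simp only [Finset.mem_Icc]; omega
  have hi' : i ∈ Finset.Icc 1 n := by simp only [Finset.mem_Icc]; omega
  -- the ratio has derivative 0 on Ico 0 T
  have hderiv : ∀ x ∈ Set.Ico (0 : ℝ) T,
      HasDerivAt (fun s => g i s / g (i + n) s) 0 x := by
    intro x hx
    have h1 := hode1 i hi' x hx
    have h2 := hode2 i hi' x hx
    have hgi : g i x ≠ 0 := (hpos i hi1 x hx).ne'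
    have hgin : g (i + n) x ≠ 0 := (hpos (i + n) hi2 x hx).ne'
    have := h1.div h2 hgin
    convert this using 1
    · rfl
    · rfl
    · rfl
    field_simp
    ring
  obtain ⟨ht0, htT⟩ := ht
  have key := constant_of_has_deriv_right_zero
    (f := fun s => g i s / g (i + n) s) (a := 0) (b := t)
    (fun x hx => by
      have hx' : x ∈ Set.Ico (0 : ℝ) T := ⟨hx.1, lt_of_le_of_lt hx.2 htT⟩
      exact ((hderiv x hx').continuousAt).continuousWithinAt)
    (fun x hx => by
      have hx' : x ∈ Set.Ico (0 : ℝ) T := ⟨hx.1, lt_of_lt_of_le hx.2 htT.le⟩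
      exact (hderiv x hx').hasDerivWithinAt)
  exact key t ⟨ht0, le_refl t⟩
end

section
/- Let g_1,...,g_{2n}, g_N : [0,T) → ℝ be positive differentiable functions satisfying g_i' = g_N/g_{i+n} - ρ g_i g_N Σ, g_{i+n}' = g_N/g_i - ρ g_{i+n} g_N Σ (1 ≤ i ≤ n), and g_N' = -(1+ρ) g_N² Σ, where Σ = Σ_{k=1}^n 1/(g_k g_{k+n}) and ρ ≠ -1. Then the quantity g_1(t)···g_n(t)·g_N(t)^{(1-nρ)/(1+ρ)} is constant in t. -/
/-- Ricci-Bourguignon flow on the Heisenberg group `H_n`: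
`g_1 ⋯ g_n ⋅ g_N ^ ((1 - nρ)/(1 + ρ))` is constant along the flow (for `ρ ≠ -1`). -/
theorem heisenberg_RB_conserved (n : ℕ) (hn : 1 ≤ n) (T ρ : ℝ) (hT : 0 < T)
    (hρ : ρ ≠ -1)
    (g : ℕ → ℝ → ℝ) (gN : ℝ → ℝ) (S : ℝ → ℝ)
    (hS : ∀ t, S t = ∑ k ∈ Finset.Icc 1 n, 1 / (g k t * g (k + n) t))
    (hpos : ∀ j ∈ Finset.Icc 1 (2 * n), ∀ t ∈ Set.Ico (0 : ℝ) T, 0 < g j t)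
    (hposN : ∀ t ∈ Set.Ico (0 : ℝ) T, 0 < gN t)
    (hode1 : ∀ i ∈ Finset.Icc 1 n, ∀ t ∈ Set.Ico (0 : ℝ) T,
      HasDerivAt (g i) (gN t / g (i + n) t - ρ * g i t * gN t * S t) t)
    (hode2 : ∀ i ∈ Finset.Icc 1 n, ∀ t ∈ Set.Ico (0 : ℝ) T,
      HasDerivAt (g (i + n)) (gN t / g i t - ρ * g (i + n) t * gN t * S t) t)
    (hodeN : ∀ t ∈ Set.Ico (0 : ℝ) T,
      HasDerivAt gN (-(1 + ρ) * (gN t) ^ 2 * S t) t) :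
    ∀ t ∈ Set.Ico (0 : ℝ) T,
      (∏ k ∈ Finset.Icc 1 n, g k t) * gN t ^ ((1 - (n : ℝ) * ρ) / (1 + ρ))
        = (∏ k ∈ Finset.Icc 1 n, g k 0) * gN 0 ^ ((1 - (n : ℝ) * ρ) / (1 + ρ)) := by
  set α : ℝ := (1 - (n : ℝ) * ρ) / (1 + ρ) with hα
  have h1ρ : (1 : ℝ) + ρ ≠ 0 := fun h => hρ (by linarith)
  have hαρ : α * (1 + ρ) = 1 - (n : ℝ) * ρ := div_mul_cancel₀ _ h1ρ
  set F : ℝ → ℝ := fun t => (∏ k ∈ Finset.Icc 1 n, g k t) * gN t ^ α with hF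
  have key : ∀ t ∈ Set.Ico (0 : ℝ) T, HasDerivAt F 0 t := by
    intro t ht
    have hgk : ∀ k ∈ Finset.Icc 1 n, 0 < g k t := fun k hk => by
      refine hpos k ?_ t ht
      simp only [Finset.mem_Icc] at hk ⊢; omega
    have hgkn : ∀ k ∈ Finset.Icc 1 n, 0 < g (k + n) t := fun k hk => by
      refine hpos (k + n) ?_ t ht
      simp only [Finset.mem_Icc] at hk ⊢; omega
    have hN : 0 < gN t := hposN t ht
    set P : ℝ := ∏ k ∈ Finset.Icc 1 n, g k t with hP
    have hPd : HasDerivAt (fun t => ∏ k ∈ Finset.Icc 1 n, g k t)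
        (∑ k ∈ Finset.Icc 1 n, (∏ j ∈ (Finset.Icc 1 n).erase k, g j t) •
          (gN t / g (k + n) t - ρ * g k t * gN t * S t)) t :=
      HasDerivAt.fun_finsetProd (fun i hi => hode1 i hi t ht)
    have hNd : HasDerivAt (fun t => gN t ^ α)
        ((-(1 + ρ) * (gN t) ^ 2 * S t) * α * gN t ^ (α - 1)) t :=
      (hodeN t ht).rpow_const (Or.inl hN.ne')
    have hsum : (∑ k ∈ Finset.Icc 1 n, (∏ j ∈ (Finset.Icc 1 n).erase k, g j t) •
          (gN t / g (k + n) t - ρ * g k t * gN t * S t))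
        = (1 - (n : ℝ) * ρ) * P * gN t * S t := by
      have hterm : ∀ k ∈ Finset.Icc 1 n,
          (∏ j ∈ (Finset.Icc 1 n).erase k, g j t) •
            (gN t / g (k + n) t - ρ * g k t * gN t * S t)
          = gN t * P * (1 / (g k t * g (k + n) t)) - ρ * gN t * S t * P := by
        intro k hk
        have hpk : (∏ j ∈ (Finset.Icc 1 n).erase k, g j t) * g k t = P :=
          Finset.prod_erase_mul _ _ hk
        rw [smul_eq_mul, ← hpk]
        have h1 : g k t ≠ 0 := (hgk k hk).ne'
        have h2 : g (k + n) t ≠ 0 := (hgkn k hk).ne'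
        field_simp
      rw [Finset.sum_congr rfl hterm, Finset.sum_sub_distrib, ← Finset.mul_sum,
        Finset.sum_const, Nat.card_Icc]
      rw [hS t]
      push_cast [Nat.add_sub_cancel]
      ring
    have hmul := hPd.mul hNd
    have : HasDerivAt F
        ((∑ k ∈ Finset.Icc 1 n, (∏ j ∈ (Finset.Icc 1 n).erase k, g j t) •
          (gN t / g (k + n) t - ρ * g k t * gN t * S t)) * gN t ^ α
         + P * ((-(1 + ρ) * (gN t) ^ 2 * S t) * α * gN t ^ (α - 1))) t := hmul
    convert this using 1
    rw [hsum]
    have hpow : gN t ^ (α - 1) * gN t = gN t ^ α := by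
      rw [← Real.rpow_add_one hN.ne', sub_add_cancel]
    linear_combination ((1 - (n : ℝ) * ρ) * P * S t * gN t) * hpow
      + (P * S t * gN t ^ 2 * (gN t ^ (α - 1))) * hαρ
  intro t ht
  have hsub : Set.Icc (0 : ℝ) t ⊆ Set.Ico (0 : ℝ) T := fun s hs =>
    ⟨hs.1, lt_of_le_of_lt hs.2 ht.2⟩
  have hcont : ContinuousOn F (Set.Icc 0 t) := fun s hs =>
    ((key s (hsub hs)).continuousAt).continuousWithinAt
  have := constant_of_has_deriv_right_zero hcont
    (fun s hs => ((key s (hsub ⟨hs.1, hs.2.le⟩)).hasDerivWithinAt)) t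
    (Set.right_mem_Icc.2 ht.1)
  exact this
end

section
/- Let g_1,...,g_{2n}, g_N : [0,∞) → ℝ be positive differentiable functions satisfying the Heisenberg Ricci-Bourguignon flow system with parameter ρ < 0 (so Σ = Σ_{k=1}^n 1/(g_k g_{k+n}) is positive and nonincreasing and each g_j, 1 ≤ j ≤ 2n, is nondecreasing). Then g_N(t) ≥ 1/(Σ(0) t + g_N(0)^{-1}) for all t ≥ 0, and consequently ∫_0^t g_N(r) dr → ∞ as t → ∞. -/
open Set Filter MeasureTheory intervalIntegral Real

/-- Ricci-Bourguignon flow on the Heisenberg group with `ρ < 0`: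
lower bound for `g_N` and divergence of `∫_0^t g_N`. -/
theorem heisenberg_RB_gN_lower_bound (n : ℕ) (hn : 1 ≤ n) (ρ : ℝ) (hρ : ρ < 0)
    (g : ℕ → ℝ → ℝ) (gN : ℝ → ℝ) (S : ℝ → ℝ)
    (hS : ∀ t, S t = ∑ k ∈ Finset.Icc 1 n, 1 / (g k t * g (k + n) t))
    (hpos : ∀ j ∈ Finset.Icc 1 (2 * n), ∀ t ∈ Set.Ici (0 : ℝ), 0 < g j t)
    (hposN : ∀ t ∈ Set.Ici (0 : ℝ), 0 < gN t)
    (hode1 : ∀ i ∈ Finset.Icc 1 n, ∀ t ∈ Set.Ici (0 : ℝ),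
      HasDerivAt (g i) (gN t / g (i + n) t - ρ * g i t * gN t * S t) t)
    (hode2 : ∀ i ∈ Finset.Icc 1 n, ∀ t ∈ Set.Ici (0 : ℝ),
      HasDerivAt (g (i + n)) (gN t / g i t - ρ * g (i + n) t * gN t * S t) t)
    (hodeN : ∀ t ∈ Set.Ici (0 : ℝ),
      HasDerivAt gN (-(1 + ρ) * (gN t) ^ 2 * S t) t) :
    (∀ t ∈ Set.Ici (0 : ℝ), gN t ≥ 1 / (S 0 * t + (gN 0)⁻¹)) ∧
      Filter.Tendsto (fun t => ∫ r in (0 : ℝ)..t, gN r) Filter.atTop Filter.atTop := by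
  -- positivity of the factors
  have hmem1 : ∀ k ∈ Finset.Icc 1 n, k ∈ Finset.Icc 1 (2 * n) := by
    intro k hk
    simp only [Finset.mem_Icc] at hk ⊢
    omega
  have hmem2 : ∀ k ∈ Finset.Icc 1 n, k + n ∈ Finset.Icc 1 (2 * n) := by
    intro k hk
    simp only [Finset.mem_Icc] at hk ⊢
    omega
  have hg1pos : ∀ k ∈ Finset.Icc 1 n, ∀ t ∈ Set.Ici (0 : ℝ), 0 < g k t :=
    fun k hk t ht => hpos k (hmem1 k hk) t ht
  have hg2pos : ∀ k ∈ Finset.Icc 1 n, ∀ t ∈ Set.Ici (0 : ℝ), 0 < g (k + n) t :=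
    fun k hk t ht => hpos (k + n) (hmem2 k hk) t ht
  -- S is positive on [0, ∞)
  have hSpos : ∀ t ∈ Set.Ici (0 : ℝ), 0 < S t := by
    intro t ht
    rw [hS t]
    apply Finset.sum_pos
    · intro k hk
      exact div_pos one_pos (mul_pos (hg1pos k hk t ht) (hg2pos k hk t ht))
    · exact Finset.nonempty_Icc.mpr hn
  -- derivative of S
  set S' : ℝ → ℝ := fun t => ∑ k ∈ Finset.Icc 1 n,
      -((gN t / g (k + n) t - ρ * g k t * gN t * S t) * g (k + n) t
        + g k t * (gN t / g k t - ρ * g (k + n) t * gN t * S t)) / (g k t * g (k + n) t) ^ 2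
    with hS'def
  have hSderiv : ∀ t ∈ Set.Ici (0 : ℝ), HasDerivAt S (S' t) t := by
    intro t ht
    have hSfun : S = fun t => ∑ k ∈ Finset.Icc 1 n, 1 / (g k t * g (k + n) t) := funext hS
    rw [hSfun]
    simp only [one_div, hS'def]
    apply HasDerivAt.fun_sum
    intro k hk
    exact ((hode1 k hk t ht).mul (hode2 k hk t ht)).inv
      (ne_of_gt (mul_pos (hg1pos k hk t ht) (hg2pos k hk t ht)))
  -- S' is nonpositive on [0, ∞)
  have hS'nonpos : ∀ t ∈ Set.Ici (0 : ℝ), S' t ≤ 0 := by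
    intro t ht
    rw [hS'def]
    apply Finset.sum_nonpos
    intro k hk
    have h1 : (0 : ℝ) < g k t := hg1pos k hk t ht
    have h2 : (0 : ℝ) < g (k + n) t := hg2pos k hk t ht
    have hN : (0 : ℝ) < gN t := hposN t ht
    have hSt : (0 : ℝ) < S t := hSpos t ht
    have hd1 : 0 ≤ gN t / g (k + n) t - ρ * g k t * gN t * S t := by
      have := div_pos hN h2
      nlinarith [mul_neg_of_neg_of_pos hρ (mul_pos (mul_pos h1 hN) hSt)]
    have hd2 : 0 ≤ gN t / g k t - ρ * g (k + n) t * gN t * S t := by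
      have := div_pos hN h1
      nlinarith [mul_neg_of_neg_of_pos hρ (mul_pos (mul_pos h2 hN) hSt)]
    have hnum : 0 ≤ (gN t / g (k + n) t - ρ * g k t * gN t * S t) * g (k + n) t
        + g k t * (gN t / g k t - ρ * g (k + n) t * gN t * S t) := by
      have := mul_nonneg hd1 h2.le
      have := mul_nonneg h1.le hd2
      linarith
    rw [neg_div]
    exact neg_nonpos.mpr (div_nonneg hnum (sq_nonneg _))
  -- S is nonincreasing on [0, ∞)
  have hSanti : AntitoneOn S (Set.Ici (0 : ℝ)) := by
    apply antitoneOn_of_deriv_nonpos (convex_Ici 0)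
    · exact fun t ht => (hSderiv t ht).continuousAt.continuousWithinAt
    · intro t ht
      rw [interior_Ici] at ht
      exact ((hSderiv t (Set.mem_Ici.mpr (le_of_lt ht))).differentiableAt).differentiableWithinAt
    · intro t ht
      rw [interior_Ici] at ht
      rw [(hSderiv t (Set.mem_Ici.mpr (le_of_lt ht))).deriv]
      exact hS'nonpos t (Set.mem_Ici.mpr (le_of_lt ht))
  have hSle : ∀ t ∈ Set.Ici (0 : ℝ), S t ≤ S 0 :=
    fun t ht => hSanti self_mem_Ici ht ht
  -- derivative of (gN)⁻¹
  have hinv : ∀ t ∈ Set.Ici (0 : ℝ),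
      HasDerivAt (fun s => (gN s)⁻¹) ((1 + ρ) * S t) t := by
    intro t ht
    have hN : (0 : ℝ) < gN t := hposN t ht
    have := (hodeN t ht).inv (ne_of_gt hN)
    refine this.congr_deriv ?_
    rw [div_eq_iff (pow_ne_zero 2 (ne_of_gt hN))]
    ring
  -- the comparison function φ
  set φ : ℝ → ℝ := fun t => S 0 * t + (gN 0)⁻¹ - (gN t)⁻¹ with hφdef
  have hlin : ∀ t : ℝ, HasDerivAt (fun s => S 0 * s + (gN 0)⁻¹) (S 0) t := by
    intro t
    simpa using ((hasDerivAt_id t).const_mul (S 0)).add_const ((gN 0)⁻¹)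
  have hφderiv : ∀ t ∈ Set.Ici (0 : ℝ), HasDerivAt φ (S 0 - (1 + ρ) * S t) t :=
    fun t ht => (hlin t).sub (hinv t ht)
  have hφnonneg : ∀ t ∈ Set.Ici (0 : ℝ), 0 ≤ S 0 - (1 + ρ) * S t := by
    intro t ht
    have h1 := hSle t ht
    have h2 := hSpos t ht
    nlinarith [mul_neg_of_neg_of_pos hρ h2]
  have hφmono : MonotoneOn φ (Set.Ici (0 : ℝ)) := by
    apply monotoneOn_of_deriv_nonneg (convex_Ici 0)
    · exact fun t ht => (hφderiv t ht).continuousAt.continuousWithinAt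
    · intro t ht
      rw [interior_Ici] at ht
      exact ((hφderiv t (Set.mem_Ici.mpr (le_of_lt ht))).differentiableAt).differentiableWithinAt
    · intro t ht
      rw [interior_Ici] at ht
      rw [(hφderiv t (Set.mem_Ici.mpr (le_of_lt ht))).deriv]
      exact hφnonneg t (Set.mem_Ici.mpr (le_of_lt ht))
  have hkey : ∀ t ∈ Set.Ici (0 : ℝ), (gN t)⁻¹ ≤ S 0 * t + (gN 0)⁻¹ := by
    intro t ht
    have h0 := hφmono self_mem_Ici ht ht
    simp only [hφdef, mul_zero, zero_add, sub_self] at h0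
    linarith
  -- first conclusion
  have part1 : ∀ t ∈ Set.Ici (0 : ℝ), gN t ≥ 1 / (S 0 * t + (gN 0)⁻¹) := by
    intro t ht
    have hN : (0 : ℝ) < gN t := hposN t ht
    have hD : (0 : ℝ) < S 0 * t + (gN 0)⁻¹ :=
      lt_of_lt_of_le (inv_pos.mpr hN) (hkey t ht)
    rw [ge_iff_le, div_le_iff₀ hD]
    calc (1 : ℝ) = gN t * (gN t)⁻¹ := (mul_inv_cancel₀ (ne_of_gt hN)).symm
      _ ≤ gN t * (S 0 * t + (gN 0)⁻¹) := by
          exact mul_le_mul_of_nonneg_left (hkey t ht) hN.le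
  refine ⟨part1, ?_⟩
  -- second conclusion: divergence of the integral
  have hcontN : ∀ t ∈ Set.Ici (0 : ℝ), ContinuousAt gN t :=
    fun t ht => (hodeN t ht).continuousAt
  have hcontOn : ContinuousOn gN (Set.Ioi (0 : ℝ)) :=
    fun t ht => (hcontN t (Set.mem_Ici.mpr (le_of_lt ht))).continuousWithinAt
  have hint : ∀ t : ℝ, 0 ≤ t → IntervalIntegrable gN volume 0 t := by
    intro t ht
    apply ContinuousOn.intervalIntegrable
    intro s hs
    rw [uIcc_of_le ht] at hs
    exact (hcontN s hs.1).continuousWithinAt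
  set F : ℝ → ℝ := fun t => ∫ r in (0 : ℝ)..t, gN r with hFdef
  have hS0 : (0 : ℝ) < S 0 := hSpos 0 self_mem_Ici
  have hgN0 : (0 : ℝ) < (gN 0)⁻¹ := inv_pos.mpr (hposN 0 self_mem_Ici)
  have hDpos : ∀ t : ℝ, 0 ≤ t → 0 < S 0 * t + (gN 0)⁻¹ :=
    fun t ht => add_pos_of_nonneg_of_pos (mul_nonneg hS0.le ht) hgN0
  -- derivative of F at positive t
  have hFderiv : ∀ t ∈ Set.Ioi (0 : ℝ), HasDerivAt F (gN t) t := by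
    intro t ht
    exact integral_hasDerivAt_right (hint t (le_of_lt ht))
      (hcontOn.stronglyMeasurableAtFilter isOpen_Ioi t ht)
      (hcontN t (Set.mem_Ici.mpr (le_of_lt ht)))
  -- F is continuous on [0, ∞)
  have hFcont : ContinuousOn F (Set.Ici (0 : ℝ)) := by
    intro t ht
    rcases eq_or_lt_of_le (Set.mem_Ici.mp ht) with h | h
    · have : HasDerivWithinAt F (gN 0) (Set.Ici (0 : ℝ)) 0 :=
        integral_hasDerivWithinAt_right (t := Set.Ioi (0 : ℝ)) (hint 0 le_rfl)
          (hcontOn.stronglyMeasurableAtFilter_nhdsWithin measurableSet_Ioi 0)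
          (hcontN 0 self_mem_Ici).continuousWithinAt
      rw [← h]
      exact this.continuousWithinAt
    · exact (hFderiv t h).continuousAt.continuousWithinAt
  -- the logarithmic lower bound
  set L : ℝ → ℝ := fun t => (S 0)⁻¹ * Real.log (S 0 * t + (gN 0)⁻¹) with hLdef
  have hLderiv : ∀ t ∈ Set.Ici (0 : ℝ),
      HasDerivAt L (1 / (S 0 * t + (gN 0)⁻¹)) t := by
    intro t ht
    have hD := hDpos t ht
    have := ((hlin t).log (ne_of_gt hD)).const_mul (S 0)⁻¹
    refine this.congr_deriv ?_
    rw [← mul_div_assoc, inv_mul_cancel₀ hS0.ne']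
  set ψ : ℝ → ℝ := fun t => F t - L t with hψdef
  have hψmono : MonotoneOn ψ (Set.Ici (0 : ℝ)) := by
    apply monotoneOn_of_deriv_nonneg (convex_Ici 0)
    · exact hFcont.sub (fun t ht => (hLderiv t ht).continuousAt.continuousWithinAt)
    · intro t ht
      rw [interior_Ici] at ht
      exact (((hFderiv t ht).sub (hLderiv t (Set.mem_Ici.mpr (le_of_lt ht)))).differentiableAt).differentiableWithinAt
    · intro t ht
      rw [interior_Ici] at ht
      rw [show ψ = F - L from rfl, ((hFderiv t ht).sub (hLderiv t (Set.mem_Ici.mpr (le_of_lt ht)))).deriv]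
      have := part1 t (Set.mem_Ici.mpr (le_of_lt ht))
      linarith
  have hFlower : ∀ t ∈ Set.Ici (0 : ℝ), L t - L 0 ≤ F t := by
    intro t ht
    have h0 := hψmono self_mem_Ici ht ht
    have hF0 : F 0 = 0 := intervalIntegral.integral_same
    simp only [hψdef, hF0, zero_sub] at h0
    linarith
  -- L t - L 0 → ∞
  have hLtop : Tendsto (fun t => L t - L 0) atTop atTop := by
    have h1 : Tendsto (fun t : ℝ => S 0 * t + (gN 0)⁻¹) atTop atTop :=
      tendsto_atTop_add_const_right _ _ (tendsto_id.const_mul_atTop hS0)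
    have h2 : Tendsto (fun t : ℝ => Real.log (S 0 * t + (gN 0)⁻¹)) atTop atTop :=
      Real.tendsto_log_atTop.comp h1
    have h3 : Tendsto L atTop atTop := h2.const_mul_atTop (inv_pos.mpr hS0)
    exact tendsto_atTop_add_const_right _ _ h3
  apply tendsto_atTop_mono' _ _ hLtop
  filter_upwards [eventually_ge_atTop (0 : ℝ)] with t ht
  exact hFlower t ht
end

section
/- Fix n ≥ 1 and a real ρ with n + 2 - nρ > 0. Let a_j > 0 (1 ≤ j ≤ 2n) and c > 0 satisfy a_i a_{n+i} = a_1 a_{1+n} for all 1 ≤ i ≤ n, and set b = (n+2-nρ)·c/(a_1 a_{1+n}). Then the functions g_j(t) = a_j (1+bt)^{(1-nρ)/(n+2-nρ)} for 1 ≤ j ≤ 2n and g_N(t) = c (1+bt)^{(n+nρ)/(nρ-n-2)} solve the system g_i' = g_N/g_{i+n} - ρ g_i g_N Σ, g_{i+n}' = g_N/g_i - ρ g_{i+n} g_N Σ, g_N' = -(1+ρ) g_N² Σ on [0,∞), where Σ = Σ_{k=1}^n 1/(g_k g_{k+n}). -/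
/-- The explicit power-law family solves the Ricci-Bourguignon flow system
on the Heisenberg group `H_n`. -/
theorem heisenberg_RB_explicit_solution (n : ℕ) (hn : 1 ≤ n) (ρ : ℝ)
    (hnρ : (0 : ℝ) < n + 2 - n * ρ)
    (a : ℕ → ℝ) (c : ℝ) (ha : ∀ j ∈ Finset.Icc 1 (2 * n), 0 < a j) (hc : 0 < c)
    (hprod : ∀ i ∈ Finset.Icc 1 n, a i * a (n + i) = a 1 * a (1 + n))
    (b : ℝ) (hb : b = (n + 2 - n * ρ) * c / (a 1 * a (1 + n)))
    (g : ℕ → ℝ → ℝ) (gN : ℝ → ℝ) (S : ℝ → ℝ)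
    (hg : ∀ j ∈ Finset.Icc 1 (2 * n), ∀ t,
      g j t = a j * (1 + b * t) ^ ((1 - n * ρ) / (n + 2 - n * ρ)))
    (hgN : ∀ t, gN t = c * (1 + b * t) ^ ((n + n * ρ) / (n * ρ - n - 2)))
    (hS : ∀ t, S t = ∑ k ∈ Finset.Icc 1 n, 1 / (g k t * g (k + n) t)) :
    (∀ i ∈ Finset.Icc 1 n, ∀ t ∈ Set.Ici (0 : ℝ),
        HasDerivAt (g i) (gN t / g (i + n) t - ρ * g i t * gN t * S t) t ∧
        HasDerivAt (g (i + n)) (gN t / g i t - ρ * g (i + n) t * gN t * S t) t) ∧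
      (∀ t ∈ Set.Ici (0 : ℝ),
        HasDerivAt gN (-(1 + ρ) * (gN t) ^ 2 * S t) t) := by
  have hD0 : (n : ℝ) + 2 - n * ρ ≠ 0 := ne_of_gt hnρ
  have hD0' : (n : ℝ) * ρ - n - 2 ≠ 0 := by intro h; apply hD0; linarith
  set α : ℝ := (1 - n * ρ) / (n + 2 - n * ρ) with hα
  set β : ℝ := ((n : ℝ) + n * ρ) / (n * ρ - n - 2) with hβ
  have hβα : β = 2 * α - 1 := by
    rw [hα, hβ, eq_sub_iff_add_eq, div_add_one hD0', mul_div_assoc', div_eq_div_iff hD0' hD0]; ring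
  have h1 : (1 : ℕ) ∈ Finset.Icc 1 (2 * n) := by simp; omega
  have h1n : (1 + n) ∈ Finset.Icc 1 (2 * n) := by simp; omega
  have hA : 0 < a 1 * a (1 + n) := mul_pos (ha 1 h1) (ha (1 + n) h1n)
  have hbpos : 0 < b := by rw [hb]; positivity
  have key : ∀ (p t : ℝ), 0 ≤ t →
      HasDerivAt (fun s : ℝ => (1 + b * s) ^ p) (p * (1 + b * t) ^ (p - 1) * b) t := by
    intro p t ht
    have hu : (0 : ℝ) < 1 + b * t := by positivity
    have h1 : HasDerivAt (fun s : ℝ => 1 + b * s) b t := by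
      simpa using ((hasDerivAt_id t).const_mul b).const_add 1
    exact (Real.hasDerivAt_rpow_const (p := p) (Or.inl hu.ne')).comp t h1
  have hSt : ∀ t : ℝ, 0 ≤ t →
      S t = n / (a 1 * a (1 + n) * ((1 + b * t) ^ α * (1 + b * t) ^ α)) := by
    intro t ht
    rw [hS]
    have hcongr : ∀ k ∈ Finset.Icc 1 n, 1 / (g k t * g (k + n) t)
        = 1 / (a 1 * a (1 + n) * ((1 + b * t) ^ α * (1 + b * t) ^ α)) := by
      intro k hk
      simp only [Finset.mem_Icc] at hk
      have hk2 : k ∈ Finset.Icc 1 (2 * n) := by simp; omega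
      have hkn2 : k + n ∈ Finset.Icc 1 (2 * n) := by simp; omega
      rw [hg k hk2, hg (k + n) hkn2]
      have hpk := hprod k (by simp; omega)
      rw [add_comm n k] at hpk
      rw [← hpk]; ring_nf
    rw [Finset.sum_congr rfl hcongr, Finset.sum_const, Nat.card_Icc]
    simp [nsmul_eq_mul]
    ring
  refine ⟨?_, ?_⟩
  · intro i hi t ht
    have ht' : (0 : ℝ) ≤ t := ht
    have hu : (0 : ℝ) < 1 + b * t := by positivity
    simp only [Finset.mem_Icc] at hi
    have hi2 : i ∈ Finset.Icc 1 (2 * n) := by simp; omega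
    have hin2 : i + n ∈ Finset.Icc 1 (2 * n) := by simp; omega
    have hai := ha i hi2
    have hain := ha (i + n) hin2
    have hprodi : a i * a (i + n) = a 1 * a (1 + n) := by
      have := hprod i (by simp; omega); rwa [add_comm n i] at this
    have hain' : a (i + n) = (a 1 * a (1 + n)) / a i := by
      field_simp; linarith [hprodi]
    have hgi : g i = fun s => a i * (1 + b * s) ^ α := funext fun s => hg i hi2 s
    have hgin : g (i + n) = fun s => a (i + n) * (1 + b * s) ^ α :=
      funext fun s => hg (i + n) hin2 s
    have hv : (0 : ℝ) < (1 + b * t) ^ α := Real.rpow_pos_of_pos hu _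
    have huβ : (1 + b * t) ^ β = (1 + b * t) ^ (α - 1) * (1 + b * t) ^ α := by
      rw [← Real.rpow_add hu, hβα]; ring_nf
    constructor
    · rw [hgi]
      have hd := (key α t ht').const_mul (a i)
      refine hd.congr_deriv (Eq.symm ?_)
      rw [hgN t, hgin, hSt t ht']
      beta_reduce
      rw [huβ, hain', hb, hα]
      field_simp
    · rw [hgin]
      have hd := (key α t ht').const_mul (a (i + n))
      refine hd.congr_deriv (Eq.symm ?_)
      rw [hgN t, hgi, hSt t ht']
      beta_reduce
      rw [huβ, hain', hb, hα]
      have := (ha 1 h1).ne'; have := (ha (1 + n) h1n).ne'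
      field_simp
  · intro t ht
    have ht' : (0 : ℝ) ≤ t := ht
    have hu : (0 : ℝ) < 1 + b * t := by positivity
    have hv : (0 : ℝ) < (1 + b * t) ^ α := Real.rpow_pos_of_pos hu _
    have huβ : (1 + b * t) ^ β = (1 + b * t) ^ (α - 1) * (1 + b * t) ^ α := by
      rw [← Real.rpow_add hu, hβα]; ring_nf
    have huβ1 : (1 + b * t) ^ (β - 1) = (1 + b * t) ^ (α - 1) * (1 + b * t) ^ (α - 1) := by
      rw [← Real.rpow_add hu, hβα]; ring_nf
    have hgNf : gN = fun s => c * (1 + b * s) ^ β := funext hgN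
    rw [hgNf]
    have hd := (key β t ht').const_mul c
    refine hd.congr_deriv (Eq.symm ?_)
    rw [hSt t ht']
    beta_reduce
    rw [huβ, huβ1]
    generalize (1 + b * t) ^ (α - 1) = P
    generalize (1 + b * t) ^ α = V at hv
    rw [hb, hβ, show (n : ℝ) * ρ - n - 2 = -(n + 2 - n * ρ) by ring, div_neg]
    have := (ha 1 h1).ne'; have := (ha (1 + n) h1n).ne'; have := hv.ne'
    field_simp
    have hD2 : (2 - ρ * n + n : ℝ) ≠ 0 := by intro h; apply hD0; linarith
    linear_combination ((1 + ρ) * P ^ 2) * (mul_inv_cancel₀ hD2)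
end

section
/- With the explicit Heisenberg solution g_j(t) = a (1+bt)^{(1-nρ)/(n+2-nρ)} (1 ≤ j ≤ 2n), g_N(t) = a² (1+bt)^{(n+nρ)/(nρ-n-2)} where g_N(0) = g_i(0) g_{n+i}(0) = a² and b = (n+2-nρ), the quantity g_N(t)/(g_i(t) g_{n+i}(t)) equals 1/((n+2-nρ)t + 1) for each i; in particular for t > 0 it is strictly less than 1, so the relation g_N = g_i g_{n+i} (Heisenberg type) fails for t > 0. -/
/-- For the explicit Heisenberg solution with `g_N(0) = g_i(0) g_{n+i}(0) = a²` and
`b = n + 2 - nρ`, the ratio `g_N/(g_i g_{n+i})` equals `1/((n+2-nρ)t + 1)`, hence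
is `< 1` for `t > 0` (failure of Heisenberg type). -/
theorem heisenberg_type_not_preserved (n : ℕ) (hn : 1 ≤ n) (ρ : ℝ)
    (hnρ : (0 : ℝ) < n + 2 - n * ρ) (a : ℝ) (ha : 0 < a)
    (b : ℝ) (hb : b = n + 2 - n * ρ) :
    ∀ t ∈ Set.Ici (0 : ℝ),
      (a ^ 2 * (1 + b * t) ^ ((n + n * ρ) / (n * ρ - n - 2))) /
          ((a * (1 + b * t) ^ ((1 - n * ρ) / (n + 2 - n * ρ))) *
            (a * (1 + b * t) ^ ((1 - n * ρ) / (n + 2 - n * ρ))))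
        = 1 / ((n + 2 - n * ρ) * t + 1) ∧
      (0 < t →
        (a ^ 2 * (1 + b * t) ^ ((n + n * ρ) / (n * ρ - n - 2))) /
            ((a * (1 + b * t) ^ ((1 - n * ρ) / (n + 2 - n * ρ))) *
              (a * (1 + b * t) ^ ((1 - n * ρ) / (n + 2 - n * ρ)))) < 1) := by
  intro t ht
  have ht0 : (0:ℝ) ≤ t := ht
  have hbpos : 0 < b := hb ▸ hnρ
  have hx : (0:ℝ) < 1 + b * t := by nlinarith
  have hne : (n:ℝ) * ρ - n - 2 ≠ 0 := by linarith
  have hne2 : (n:ℝ) + 2 - n * ρ ≠ 0 := ne_of_gt hnρ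
  have key :
      (a ^ 2 * (1 + b * t) ^ ((n + n * ρ) / (n * ρ - n - 2))) /
          ((a * (1 + b * t) ^ ((1 - n * ρ) / (n + 2 - n * ρ))) *
            (a * (1 + b * t) ^ ((1 - n * ρ) / (n + 2 - n * ρ))))
        = (1 + b * t) ^ (-1 : ℝ) := by
    rw [mul_mul_mul_comm, ← Real.rpow_add hx, ← sq,
      mul_div_mul_left _ _ (by positivity : a ^ 2 ≠ 0),
      ← Real.rpow_sub hx, show ((n:ℝ) + n * ρ) / (n * ρ - n - 2) -
        ((1 - n * ρ) / (n + 2 - n * ρ) + (1 - n * ρ) / (n + 2 - n * ρ)) = -1 by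
          rw [div_add_div _ _ hne2 hne2, div_sub_div _ _ hne (mul_ne_zero hne2 hne2),
            div_eq_iff (mul_ne_zero hne (mul_ne_zero hne2 hne2))]; ring]
  rw [key]
  have heq : (1 + b * t) ^ (-1 : ℝ) = 1 / ((n + 2 - n * ρ) * t + 1) := by
    rw [Real.rpow_neg_one, ← hb]
    rw [inv_eq_one_div]
    ring_nf
  refine ⟨heq, fun htp => ?_⟩
  rw [Real.rpow_neg_one]
  have : (1:ℝ) < 1 + b * t := by nlinarith
  rw [inv_lt_one_iff₀]; right; exact this
end

section
/- Let g_1,...,g_{4n}, h_1, h_2, h_3 : [0,T) → ℝ be positive differentiable functions satisfying the quaternionic Ricci-Bourguignon flow system (with parameter ρ, ρ ≠ -1/3). Then the quantity g_1(t)···g_{4n}(t)·(h_1(t) h_2(t) h_3(t))^{2(1-2nρ)/(1+3ρ)} is constant in t. -/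
set_option maxHeartbeats 1000000

private lemma quaternion_RB_aux (a b c d u v w s ρ : ℝ)
    (ha : a ≠ 0) (hb : b ≠ 0) (hc : c ≠ 0) (hd : d ≠ 0) :
    (u/b + w/c + v/d - ρ*a*s)/a + (u/a + v/c + w/d - ρ*b*s)/b
      + (w/a + v/b + u/d - ρ*c*s)/c + (v/a + w/b + u/c - ρ*d*s)/d
    = 2*u*(1/(a*b) + 1/(c*d)) + 2*v*(1/(a*d) + 1/(b*c))
      + 2*w*(1/(a*c) + 1/(b*d)) - 4*ρ*s := by
  field_simp
  ring

/-- Ricci-Bourguignon flow on the quaternion group `Q_n`: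
`g_1 ⋯ g_{4n} (h_1 h_2 h_3)^{2(1-2nρ)/(1+3ρ)}` is constant along the flow. -/
theorem quaternion_RB_conserved (n : ℕ) (hn : 1 ≤ n) (T ρ : ℝ) (hT : 0 < T)
    (hρ : ρ ≠ -1/3)
    (g : ℕ → ℝ → ℝ) (h1 h2 h3 : ℝ → ℝ) (S1 S2 S3 S' : ℝ → ℝ)
    (hS1 : ∀ t, S1 t = ∑ i ∈ Finset.Icc 1 n,
      (1 / (g i t * g (n + i) t) + 1 / (g (2*n + i) t * g (3*n + i) t)))
    (hS2 : ∀ t, S2 t = ∑ i ∈ Finset.Icc 1 n,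
      (1 / (g i t * g (3*n + i) t) + 1 / (g (n + i) t * g (2*n + i) t)))
    (hS3 : ∀ t, S3 t = ∑ i ∈ Finset.Icc 1 n,
      (1 / (g i t * g (2*n + i) t) + 1 / (g (n + i) t * g (3*n + i) t)))
    (hS' : ∀ t, S' t = h1 t * S1 t + h2 t * S2 t + h3 t * S3 t)
    (hpos : ∀ j ∈ Finset.Icc 1 (4 * n), ∀ t ∈ Set.Ico (0 : ℝ) T, 0 < g j t)
    (hpos1 : ∀ t ∈ Set.Ico (0 : ℝ) T, 0 < h1 t)
    (hpos2 : ∀ t ∈ Set.Ico (0 : ℝ) T, 0 < h2 t)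
    (hpos3 : ∀ t ∈ Set.Ico (0 : ℝ) T, 0 < h3 t)
    (hode1 : ∀ i ∈ Finset.Icc 1 n, ∀ t ∈ Set.Ico (0 : ℝ) T,
      HasDerivAt (g i)
        (h1 t / g (n + i) t + h3 t / g (2*n + i) t + h2 t / g (3*n + i) t
          - ρ * g i t * S' t) t)
    (hode2 : ∀ i ∈ Finset.Icc 1 n, ∀ t ∈ Set.Ico (0 : ℝ) T,
      HasDerivAt (g (n + i))
        (h1 t / g i t + h2 t / g (2*n + i) t + h3 t / g (3*n + i) t
          - ρ * g (n + i) t * S' t) t)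
    (hode3 : ∀ i ∈ Finset.Icc 1 n, ∀ t ∈ Set.Ico (0 : ℝ) T,
      HasDerivAt (g (2*n + i))
        (h3 t / g i t + h2 t / g (n + i) t + h1 t / g (3*n + i) t
          - ρ * g (2*n + i) t * S' t) t)
    (hode4 : ∀ i ∈ Finset.Icc 1 n, ∀ t ∈ Set.Ico (0 : ℝ) T,
      HasDerivAt (g (3*n + i))
        (h2 t / g i t + h3 t / g (n + i) t + h1 t / g (2*n + i) t
          - ρ * g (3*n + i) t * S' t) t)
    (hodeh1 : ∀ t ∈ Set.Ico (0 : ℝ) T,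
      HasDerivAt h1 (-(h1 t) ^ 2 * S1 t - ρ * h1 t * S' t) t)
    (hodeh2 : ∀ t ∈ Set.Ico (0 : ℝ) T,
      HasDerivAt h2 (-(h2 t) ^ 2 * S2 t - ρ * h2 t * S' t) t)
    (hodeh3 : ∀ t ∈ Set.Ico (0 : ℝ) T,
      HasDerivAt h3 (-(h3 t) ^ 2 * S3 t - ρ * h3 t * S' t) t) :
    ∀ t ∈ Set.Ico (0 : ℝ) T,
      (∏ j ∈ Finset.Icc 1 (4 * n), g j t) *
          (h1 t * h2 t * h3 t) ^ (2 * (1 - 2 * (n : ℝ) * ρ) / (1 + 3 * ρ))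
        = (∏ j ∈ Finset.Icc 1 (4 * n), g j 0) *
            (h1 0 * h2 0 * h3 0) ^ (2 * (1 - 2 * (n : ℝ) * ρ) / (1 + 3 * ρ)) := by
  have h3ρ : (1 : ℝ) + 3 * ρ ≠ 0 := by
    intro h; exact hρ (by linarith)
  set α : ℝ := 2 * (1 - 2 * (n : ℝ) * ρ) / (1 + 3 * ρ) with hαdef
  have hαe : α * (1 + 3 * ρ) = 2 - 4 * (n : ℝ) * ρ := by
    rw [hαdef, div_mul_cancel₀ _ h3ρ]; ring
  -- splitting the index set
  have hsplit : ∀ f : ℕ → ℝ, ∑ j ∈ Finset.Icc 1 (4*n), f j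
      = ∑ i ∈ Finset.Icc 1 n, (f i + f (n+i) + f (2*n+i) + f (3*n+i)) := by
    intro f
    have shift : ∀ m : ℕ, ∑ j ∈ Finset.Ioc m (m+n), f j = ∑ i ∈ Finset.Ioc 0 n, f (m+i) := by
      intro m
      have hm := Finset.map_add_left_Ioc 0 n m
      simp only [Nat.add_zero] at hm
      rw [← hm, Finset.sum_map]
      rfl
    have e1 : Finset.Icc 1 (4*n) = Finset.Ioc 0 (4*n) := by rw [← Finset.Icc_add_one_left_eq_Ioc]; rfl
    have e2 : Finset.Icc 1 n = Finset.Ioc 0 n := by rw [← Finset.Icc_add_one_left_eq_Ioc]; rfl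
    rw [e1, e2]
    have c1 := Finset.sum_Ioc_consecutive f (by omega : 0 ≤ n) (by omega : n ≤ 2*n)
    have c2 := Finset.sum_Ioc_consecutive f (by omega : 0 ≤ 2*n) (by omega : 2*n ≤ 3*n)
    have c3 := Finset.sum_Ioc_consecutive f (by omega : 0 ≤ 3*n) (by omega : 3*n ≤ 4*n)
    have s1 := shift n; have s2 := shift (2*n); have s3 := shift (3*n)
    rw [show n + n = 2*n by ring] at s1
    rw [show 2*n + n = 3*n by ring] at s2
    rw [show 3*n + n = 4*n by ring] at s3
    rw [← c3, ← c2, ← c1, s1, s2, s3, Finset.sum_add_distrib, Finset.sum_add_distrib,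
      Finset.sum_add_distrib]
  have m1 : ∀ i ∈ Finset.Icc 1 n, i ∈ Finset.Icc 1 (4*n) := by
    intro i hi; rw [Finset.mem_Icc] at *; omega
  have m2 : ∀ i ∈ Finset.Icc 1 n, n + i ∈ Finset.Icc 1 (4*n) := by
    intro i hi; rw [Finset.mem_Icc] at *; omega
  have m3 : ∀ i ∈ Finset.Icc 1 n, 2*n + i ∈ Finset.Icc 1 (4*n) := by
    intro i hi; rw [Finset.mem_Icc] at *; omega
  have m4 : ∀ i ∈ Finset.Icc 1 n, 3*n + i ∈ Finset.Icc 1 (4*n) := by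
    intro i hi; rw [Finset.mem_Icc] at *; omega
  set L : ℝ → ℝ := fun τ =>
      (∑ i ∈ Finset.Icc 1 n, (Real.log (g i τ) + Real.log (g (n+i) τ)
        + Real.log (g (2*n+i) τ) + Real.log (g (3*n+i) τ)))
      + α * (Real.log (h1 τ) + Real.log (h2 τ) + Real.log (h3 τ)) with hLdef
  have hLderiv : ∀ t ∈ Set.Ico (0:ℝ) T, HasDerivAt L 0 t := by
    intro t ht
    have hg : ∀ j ∈ Finset.Icc 1 (4*n), g j t ≠ 0 := fun j hj => ne_of_gt (hpos j hj t ht)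
    have hh1 : h1 t ≠ 0 := ne_of_gt (hpos1 t ht)
    have hh2 : h2 t ≠ 0 := ne_of_gt (hpos2 t ht)
    have hh3 : h3 t ≠ 0 := ne_of_gt (hpos3 t ht)
    have dsum : HasDerivAt (fun τ => ∑ i ∈ Finset.Icc 1 n, (Real.log (g i τ)
        + Real.log (g (n+i) τ) + Real.log (g (2*n+i) τ) + Real.log (g (3*n+i) τ)))
        (∑ i ∈ Finset.Icc 1 n,
          ((h1 t / g (n + i) t + h3 t / g (2*n + i) t + h2 t / g (3*n + i) t
              - ρ * g i t * S' t) / g i t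
          + (h1 t / g i t + h2 t / g (2*n + i) t + h3 t / g (3*n + i) t
              - ρ * g (n + i) t * S' t) / g (n + i) t
          + (h3 t / g i t + h2 t / g (n + i) t + h1 t / g (3*n + i) t
              - ρ * g (2*n + i) t * S' t) / g (2*n + i) t
          + (h2 t / g i t + h3 t / g (n + i) t + h1 t / g (2*n + i) t
              - ρ * g (3*n + i) t * S' t) / g (3*n + i) t)) t := by
      apply HasDerivAt.fun_sum
      intro i hi
      exact ((((hode1 i hi t ht).log (hg i (m1 i hi))).add
        ((hode2 i hi t ht).log (hg _ (m2 i hi)))).add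
        ((hode3 i hi t ht).log (hg _ (m3 i hi)))).add
        ((hode4 i hi t ht).log (hg _ (m4 i hi)))
    have dh : HasDerivAt (fun τ => α * (Real.log (h1 τ) + Real.log (h2 τ) + Real.log (h3 τ)))
        (α * ((-(h1 t) ^ 2 * S1 t - ρ * h1 t * S' t) / h1 t
          + (-(h2 t) ^ 2 * S2 t - ρ * h2 t * S' t) / h2 t
          + (-(h3 t) ^ 2 * S3 t - ρ * h3 t * S' t) / h3 t)) t :=
      ((((hodeh1 t ht).log hh1).add ((hodeh2 t ht).log hh2)).add
        ((hodeh3 t ht).log hh3)).const_mul α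
    have key := dsum.add dh
    have esum : (∑ i ∈ Finset.Icc 1 n,
          ((h1 t / g (n + i) t + h3 t / g (2*n + i) t + h2 t / g (3*n + i) t
              - ρ * g i t * S' t) / g i t
          + (h1 t / g i t + h2 t / g (2*n + i) t + h3 t / g (3*n + i) t
              - ρ * g (n + i) t * S' t) / g (n + i) t
          + (h3 t / g i t + h2 t / g (n + i) t + h1 t / g (3*n + i) t
              - ρ * g (2*n + i) t * S' t) / g (2*n + i) t
          + (h2 t / g i t + h3 t / g (n + i) t + h1 t / g (2*n + i) t
              - ρ * g (3*n + i) t * S' t) / g (3*n + i) t))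
        = 2 * h1 t * S1 t + 2 * h2 t * S2 t + 2 * h3 t * S3 t - 4*(n:ℝ)*ρ*S' t := by
      have step : ∀ i ∈ Finset.Icc 1 n,
          ((h1 t / g (n + i) t + h3 t / g (2*n + i) t + h2 t / g (3*n + i) t
              - ρ * g i t * S' t) / g i t
          + (h1 t / g i t + h2 t / g (2*n + i) t + h3 t / g (3*n + i) t
              - ρ * g (n + i) t * S' t) / g (n + i) t
          + (h3 t / g i t + h2 t / g (n + i) t + h1 t / g (3*n + i) t
              - ρ * g (2*n + i) t * S' t) / g (2*n + i) t
          + (h2 t / g i t + h3 t / g (n + i) t + h1 t / g (2*n + i) t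
              - ρ * g (3*n + i) t * S' t) / g (3*n + i) t)
          = (2 * h1 t * (1 / (g i t * g (n + i) t) + 1 / (g (2*n + i) t * g (3*n + i) t))
            + 2 * h2 t * (1 / (g i t * g (3*n + i) t) + 1 / (g (n + i) t * g (2*n + i) t))
            + 2 * h3 t * (1 / (g i t * g (2*n + i) t) + 1 / (g (n + i) t * g (3*n + i) t)))
            - 4 * ρ * S' t := by
        intro i hi
        have ha := hg i (m1 i hi)
        have hb := hg _ (m2 i hi)
        have hc := hg _ (m3 i hi)
        have hd := hg _ (m4 i hi)
        exact quaternion_RB_aux _ _ _ _ _ _ _ _ _ ha hb hc hd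
      rw [Finset.sum_congr rfl step, hS1 t, hS2 t, hS3 t, Finset.mul_sum, Finset.mul_sum,
        Finset.mul_sum, Finset.sum_sub_distrib, ← Finset.sum_add_distrib,
        ← Finset.sum_add_distrib, Finset.sum_const, Nat.card_Icc]
      have hcard : n + 1 - 1 = n := by omega
      rw [hcard, nsmul_eq_mul]
      ring
    rw [esum] at key
    have hA : (-(h1 t) ^ 2 * S1 t - ρ * h1 t * S' t) / h1 t
        = -(h1 t * S1 t) - ρ * S' t := by field_simp
    have hB : (-(h2 t) ^ 2 * S2 t - ρ * h2 t * S' t) / h2 t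
        = -(h2 t * S2 t) - ρ * S' t := by field_simp
    have hC : (-(h3 t) ^ 2 * S3 t - ρ * h3 t * S' t) / h3 t
        = -(h3 t * S3 t) - ρ * S' t := by field_simp
    rw [hA, hB, hC] at key
    have hzero : 2 * h1 t * S1 t + 2 * h2 t * S2 t + 2 * h3 t * S3 t - 4*(n:ℝ)*ρ*S' t
        + α * ((-(h1 t * S1 t) - ρ * S' t) + (-(h2 t * S2 t) - ρ * S' t)
          + (-(h3 t * S3 t) - ρ * S' t)) = 0 := by
      rw [hS' t]
      linear_combination (-(h1 t * S1 t + h2 t * S2 t + h3 t * S3 t)) * hαe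
    rw [hLdef]
    exact hzero ▸ key
  have hFeq : ∀ t ∈ Set.Ico (0:ℝ) T,
      (∏ j ∈ Finset.Icc 1 (4*n), g j t) * (h1 t * h2 t * h3 t) ^ α = Real.exp (L t) := by
    intro t ht
    have hprod : ∏ j ∈ Finset.Icc 1 (4*n), g j t
        = Real.exp (∑ j ∈ Finset.Icc 1 (4*n), Real.log (g j t)) := by
      rw [Real.exp_sum]
      exact (Finset.prod_congr rfl fun j hj => (Real.exp_log (hpos j hj t ht)).symm)
    have hhpos : 0 < h1 t * h2 t * h3 t :=
      mul_pos (mul_pos (hpos1 t ht) (hpos2 t ht)) (hpos3 t ht)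
    have hh : (h1 t * h2 t * h3 t) ^ α
        = Real.exp (α * (Real.log (h1 t) + Real.log (h2 t) + Real.log (h3 t))) := by
      rw [Real.rpow_def_of_pos hhpos, Real.log_mul
        (mul_pos (hpos1 t ht) (hpos2 t ht)).ne' (ne_of_gt (hpos3 t ht)),
        Real.log_mul (ne_of_gt (hpos1 t ht)) (ne_of_gt (hpos2 t ht)), mul_comm]
    rw [hprod, hh, ← Real.exp_add, hLdef]
    congr 1
    rw [hsplit (fun j => Real.log (g j t))]
  intro t ht
  have h0mem : (0:ℝ) ∈ Set.Ico (0:ℝ) T := ⟨le_refl _, hT⟩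
  rw [hFeq t ht, hFeq 0 h0mem]
  have hcont : ContinuousOn L (Set.Icc 0 t) := fun x hx =>
    ((hLderiv x ⟨hx.1, lt_of_le_of_lt hx.2 ht.2⟩).continuousAt).continuousWithinAt
  have hder : ∀ x ∈ Set.Ico (0:ℝ) t, HasDerivWithinAt L 0 (Set.Ici x) x := fun x hx =>
    (hLderiv x ⟨hx.1, lt_trans hx.2 ht.2⟩).hasDerivWithinAt
  have := constant_of_has_deriv_right_zero hcont hder t (Set.mem_Icc.mpr ⟨ht.1, le_refl t⟩)
  exact congrArg Real.exp this
end

section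
/- Let g_1,...,g_{4n}, h_1, h_2, h_3 : [0,∞) → ℝ be positive differentiable functions satisfying the quaternionic Ricci-Bourguignon flow system with ρ < 0 (so each Σ_k is positive and nonincreasing). Then h_1(t) ≥ 1/(Σ_1(0) t + h_1(0)^{-1}) for all t ≥ 0, and hence ∫_0^t h_1(r) dr → ∞ as t → ∞. -/
lemma monoOn_Ici_of_hasDerivAt' {f : ℝ → ℝ}
    (h : ∀ t ∈ Set.Ici (0:ℝ), ∃ d, HasDerivAt f d t ∧ 0 ≤ d) :
    MonotoneOn f (Set.Ici 0) := by
  apply monotoneOn_of_deriv_nonneg (convex_Ici 0)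
  · intro t ht
    obtain ⟨d, hd, _⟩ := h t ht
    exact hd.continuousAt.continuousWithinAt
  · intro t ht
    rw [interior_Ici] at ht
    obtain ⟨d, hd, _⟩ := h t (Set.mem_Ici.2 (le_of_lt ht))
    exact hd.differentiableAt.differentiableWithinAt
  · intro t ht
    rw [interior_Ici] at ht
    obtain ⟨d, hd, hd0⟩ := h t (Set.mem_Ici.2 (le_of_lt ht))
    rw [hd.deriv]; exact hd0

/-- Quaternionic Ricci-Bourguignon flow with `ρ < 0`: lower bound for `h₁`
and divergence of `∫_0^t h₁`. -/
theorem quaternion_RB_h1_lower_bound (n : ℕ) (hn : 1 ≤ n) (ρ : ℝ) (hρ : ρ < 0)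
    (g : ℕ → ℝ → ℝ) (h1 h2 h3 : ℝ → ℝ) (S1 S2 S3 S' : ℝ → ℝ)
    (hS1 : ∀ t, S1 t = ∑ i ∈ Finset.Icc 1 n,
      (1 / (g i t * g (n + i) t) + 1 / (g (2*n + i) t * g (3*n + i) t)))
    (hS2 : ∀ t, S2 t = ∑ i ∈ Finset.Icc 1 n,
      (1 / (g i t * g (3*n + i) t) + 1 / (g (n + i) t * g (2*n + i) t)))
    (hS3 : ∀ t, S3 t = ∑ i ∈ Finset.Icc 1 n,
      (1 / (g i t * g (2*n + i) t) + 1 / (g (n + i) t * g (3*n + i) t)))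
    (hS' : ∀ t, S' t = h1 t * S1 t + h2 t * S2 t + h3 t * S3 t)
    (hpos : ∀ j ∈ Finset.Icc 1 (4 * n), ∀ t ∈ Set.Ici (0 : ℝ), 0 < g j t)
    (hpos1 : ∀ t ∈ Set.Ici (0 : ℝ), 0 < h1 t)
    (hpos2 : ∀ t ∈ Set.Ici (0 : ℝ), 0 < h2 t)
    (hpos3 : ∀ t ∈ Set.Ici (0 : ℝ), 0 < h3 t)
    (hode1 : ∀ i ∈ Finset.Icc 1 n, ∀ t ∈ Set.Ici (0 : ℝ),
      HasDerivAt (g i)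
        (h1 t / g (n + i) t + h3 t / g (2*n + i) t + h2 t / g (3*n + i) t
          - ρ * g i t * S' t) t)
    (hode2 : ∀ i ∈ Finset.Icc 1 n, ∀ t ∈ Set.Ici (0 : ℝ),
      HasDerivAt (g (n + i))
        (h1 t / g i t + h2 t / g (2*n + i) t + h3 t / g (3*n + i) t
          - ρ * g (n + i) t * S' t) t)
    (hode3 : ∀ i ∈ Finset.Icc 1 n, ∀ t ∈ Set.Ici (0 : ℝ),
      HasDerivAt (g (2*n + i))
        (h3 t / g i t + h2 t / g (n + i) t + h1 t / g (3*n + i) t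
          - ρ * g (2*n + i) t * S' t) t)
    (hode4 : ∀ i ∈ Finset.Icc 1 n, ∀ t ∈ Set.Ici (0 : ℝ),
      HasDerivAt (g (3*n + i))
        (h2 t / g i t + h3 t / g (n + i) t + h1 t / g (2*n + i) t
          - ρ * g (3*n + i) t * S' t) t)
    (hodeh1 : ∀ t ∈ Set.Ici (0 : ℝ),
      HasDerivAt h1 (-(h1 t) ^ 2 * S1 t - ρ * h1 t * S' t) t)
    (hodeh2 : ∀ t ∈ Set.Ici (0 : ℝ),
      HasDerivAt h2 (-(h2 t) ^ 2 * S2 t - ρ * h2 t * S' t) t)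
    (hodeh3 : ∀ t ∈ Set.Ici (0 : ℝ),
      HasDerivAt h3 (-(h3 t) ^ 2 * S3 t - ρ * h3 t * S' t) t) :
    (∀ t ∈ Set.Ici (0 : ℝ), h1 t ≥ 1 / (S1 0 * t + (h1 0)⁻¹)) ∧
      Filter.Tendsto (fun t => ∫ r in (0 : ℝ)..t, h1 r) Filter.atTop Filter.atTop := by
  have zero_mem : (0:ℝ) ∈ Set.Ici (0:ℝ) := Set.mem_Ici.2 le_rfl
  -- positivity of the four g-families
  have hn4 : ∀ i ∈ Finset.Icc 1 n, ∀ t ∈ Set.Ici (0:ℝ),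
      0 < g i t ∧ 0 < g (n+i) t ∧ 0 < g (2*n+i) t ∧ 0 < g (3*n+i) t := by
    intro i hi t ht
    rw [Finset.mem_Icc] at hi
    refine ⟨hpos i ?_ t ht, hpos (n+i) ?_ t ht, hpos (2*n+i) ?_ t ht,
      hpos (3*n+i) ?_ t ht⟩ <;> rw [Finset.mem_Icc] <;> omega
  have hne : Finset.Icc 1 n |>.Nonempty := ⟨1, Finset.mem_Icc.2 ⟨le_rfl, hn⟩⟩
  have hS1pos : ∀ t ∈ Set.Ici (0:ℝ), 0 < S1 t := by
    intro t ht
    rw [hS1]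
    refine Finset.sum_pos (fun i hi => ?_) hne
    obtain ⟨p1, p2, p3, p4⟩ := hn4 i hi t ht
    positivity
  have hS2pos : ∀ t ∈ Set.Ici (0:ℝ), 0 < S2 t := by
    intro t ht
    rw [hS2]
    refine Finset.sum_pos (fun i hi => ?_) hne
    obtain ⟨p1, p2, p3, p4⟩ := hn4 i hi t ht
    positivity
  have hS3pos : ∀ t ∈ Set.Ici (0:ℝ), 0 < S3 t := by
    intro t ht
    rw [hS3]
    refine Finset.sum_pos (fun i hi => ?_) hne
    obtain ⟨p1, p2, p3, p4⟩ := hn4 i hi t ht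
    positivity
  have hS'pos : ∀ t ∈ Set.Ici (0:ℝ), 0 < S' t := by
    intro t ht
    rw [hS']
    have := hpos1 t ht; have := hpos2 t ht; have := hpos3 t ht
    have := hS1pos t ht; have := hS2pos t ht; have := hS3pos t ht
    positivity
  -- monotonicity of each g-family
  have hmono1 : ∀ i ∈ Finset.Icc 1 n, MonotoneOn (g i) (Set.Ici 0) := by
    intro i hi
    refine monoOn_Ici_of_hasDerivAt' (fun t ht => ⟨_, hode1 i hi t ht, ?_⟩)
    obtain ⟨p1, p2, p3, p4⟩ := hn4 i hi t ht
    have q1 := hpos1 t ht; have q2 := hpos2 t ht; have q3 := hpos3 t ht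
    have qS := hS'pos t ht
    have d1 : 0 < h1 t / g (n+i) t := div_pos q1 p2
    have d2 : 0 < h3 t / g (2*n+i) t := div_pos q3 p3
    have d3 : 0 < h2 t / g (3*n+i) t := div_pos q2 p4
    nlinarith [mul_pos p1 qS]
  have hmono2 : ∀ i ∈ Finset.Icc 1 n, MonotoneOn (g (n+i)) (Set.Ici 0) := by
    intro i hi
    refine monoOn_Ici_of_hasDerivAt' (fun t ht => ⟨_, hode2 i hi t ht, ?_⟩)
    obtain ⟨p1, p2, p3, p4⟩ := hn4 i hi t ht
    have q1 := hpos1 t ht; have q2 := hpos2 t ht; have q3 := hpos3 t ht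
    have qS := hS'pos t ht
    have d1 : 0 < h1 t / g i t := div_pos q1 p1
    have d2 : 0 < h2 t / g (2*n+i) t := div_pos q2 p3
    have d3 : 0 < h3 t / g (3*n+i) t := div_pos q3 p4
    nlinarith [mul_pos p2 qS]
  have hmono3 : ∀ i ∈ Finset.Icc 1 n, MonotoneOn (g (2*n+i)) (Set.Ici 0) := by
    intro i hi
    refine monoOn_Ici_of_hasDerivAt' (fun t ht => ⟨_, hode3 i hi t ht, ?_⟩)
    obtain ⟨p1, p2, p3, p4⟩ := hn4 i hi t ht
    have q1 := hpos1 t ht; have q2 := hpos2 t ht; have q3 := hpos3 t ht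
    have qS := hS'pos t ht
    have d1 : 0 < h3 t / g i t := div_pos q3 p1
    have d2 : 0 < h2 t / g (n+i) t := div_pos q2 p2
    have d3 : 0 < h1 t / g (3*n+i) t := div_pos q1 p4
    nlinarith [mul_pos p3 qS]
  have hmono4 : ∀ i ∈ Finset.Icc 1 n, MonotoneOn (g (3*n+i)) (Set.Ici 0) := by
    intro i hi
    refine monoOn_Ici_of_hasDerivAt' (fun t ht => ⟨_, hode4 i hi t ht, ?_⟩)
    obtain ⟨p1, p2, p3, p4⟩ := hn4 i hi t ht
    have q1 := hpos1 t ht; have q2 := hpos2 t ht; have q3 := hpos3 t ht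
    have qS := hS'pos t ht
    have d1 : 0 < h2 t / g i t := div_pos q2 p1
    have d2 : 0 < h3 t / g (n+i) t := div_pos q3 p2
    have d3 : 0 < h1 t / g (2*n+i) t := div_pos q1 p3
    nlinarith [mul_pos p4 qS]
  -- S1 is bounded above by S1 0
  have hS1le : ∀ t ∈ Set.Ici (0:ℝ), S1 t ≤ S1 0 := by
    intro t ht
    rw [hS1 t, hS1 0]
    refine Finset.sum_le_sum (fun i hi => ?_)
    obtain ⟨p1, p2, p3, p4⟩ := hn4 i hi 0 zero_mem
    obtain ⟨q1, q2, q3, q4⟩ := hn4 i hi t ht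
    have m1 := hmono1 i hi zero_mem ht (Set.mem_Ici.1 ht)
    have m2 := hmono2 i hi zero_mem ht (Set.mem_Ici.1 ht)
    have m3 := hmono3 i hi zero_mem ht (Set.mem_Ici.1 ht)
    have m4 := hmono4 i hi zero_mem ht (Set.mem_Ici.1 ht)
    gcongr
  -- the comparison function F
  set a : ℝ := S1 0 with ha_def
  set b : ℝ := (h1 0)⁻¹ with hb_def
  have ha : 0 < a := hS1pos 0 zero_mem
  have hb : 0 < b := inv_pos.2 (hpos1 0 zero_mem)
  have hFmono : MonotoneOn (fun t => a * t + b - (h1 t)⁻¹) (Set.Ici 0) := by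
    refine monoOn_Ici_of_hasDerivAt' (fun t ht => ?_)
    have q1 := hpos1 t ht
    have hne1 : h1 t ≠ 0 := ne_of_gt q1
    have hd := hodeh1 t ht
    have hinv := hd.inv hne1
    have hlin : HasDerivAt (fun t : ℝ => a * t + b) a t := by
      simpa using ((hasDerivAt_id t).const_mul a).add_const b
    refine ⟨_, hlin.sub hinv, ?_⟩
    have qS := hS'pos t ht
    have hle := hS1le t ht
    have heq : -(-(h1 t) ^ 2 * S1 t - ρ * h1 t * S' t) / h1 t ^ 2
        = S1 t + ρ * S' t / h1 t := by
      field_simp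
      ring
    rw [heq]
    have hneg : ρ * S' t / h1 t < 0 := div_neg_of_neg_of_pos (mul_neg_of_neg_of_pos hρ qS) q1
    linarith
  have hbound : ∀ t ∈ Set.Ici (0:ℝ), (h1 t)⁻¹ ≤ a * t + b := by
    intro t ht
    have := hFmono zero_mem ht (Set.mem_Ici.1 ht)
    simp only [mul_zero, zero_add, ← hb_def, sub_self] at this
    linarith
  have part1 : ∀ t ∈ Set.Ici (0:ℝ), h1 t ≥ 1 / (a * t + b) := by
    intro t ht
    have q1 := hpos1 t ht
    have hD : 0 < a * t + b := by
      have := Set.mem_Ici.1 ht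
      positivity
    have := one_div_le_one_div_of_le (inv_pos.2 q1) (hbound t ht)
    simpa [one_div] using this
  refine ⟨part1, ?_⟩
  -- divergence of the integral
  have hcont_h1 : ∀ t : ℝ, 0 ≤ t → ContinuousOn h1 (Set.Icc 0 t) := by
    intro t _
    intro r hr
    exact (hodeh1 r (Set.mem_Ici.2 hr.1)).continuousAt.continuousWithinAt
  have key : ∀ t ∈ Set.Ici (0:ℝ),
      Real.log (a * t + b) / a - Real.log b / a ≤ ∫ r in (0:ℝ)..t, h1 r := by
    intro t ht
    have ht0 : (0:ℝ) ≤ t := Set.mem_Ici.1 ht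
    have hpos_lin : ∀ r ∈ Set.Icc (0:ℝ) t, 0 < a * r + b := by
      intro r hr
      have := hr.1
      positivity
    have hderivF : ∀ r ∈ Set.uIcc (0:ℝ) t,
        HasDerivAt (fun r => Real.log (a * r + b) / a) (1 / (a * r + b)) r := by
      intro r hr
      rw [Set.uIcc_of_le ht0] at hr
      have hlr : 0 < a * r + b := hpos_lin r hr
      have hlin : HasDerivAt (fun r : ℝ => a * r + b) a r := by
        simpa using ((hasDerivAt_id r).const_mul a).add_const b
      have hlog : HasDerivAt (fun r => Real.log (a * r + b)) ((a * r + b)⁻¹ * a) r :=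
        by have := (Real.hasDerivAt_log hlr.ne').comp r hlin; exact this
      have := hlog.div_const a
      rwa [mul_div_assoc, div_self ha.ne', mul_one, ← one_div] at this
    have hcf : ContinuousOn (fun r => 1 / (a * r + b)) (Set.Icc 0 t) := by
      refine ContinuousOn.div continuousOn_const ?_ (fun r hr => ne_of_gt (hpos_lin r hr))
      fun_prop
    have hintf : IntervalIntegrable (fun r => 1 / (a * r + b)) MeasureTheory.volume 0 t := by
      apply ContinuousOn.intervalIntegrable
      rwa [Set.uIcc_of_le ht0]
    have hinth : IntervalIntegrable h1 MeasureTheory.volume 0 t := by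
      apply ContinuousOn.intervalIntegrable
      rw [Set.uIcc_of_le ht0]
      exact hcont_h1 t ht0
    have heq : ∫ r in (0:ℝ)..t, 1 / (a * r + b)
        = Real.log (a * t + b) / a - Real.log (a * 0 + b) / a :=
      intervalIntegral.integral_eq_sub_of_hasDerivAt hderivF hintf
    have hmono_int : ∫ r in (0:ℝ)..t, 1 / (a * r + b) ≤ ∫ r in (0:ℝ)..t, h1 r := by
      refine intervalIntegral.integral_mono_on ht0 hintf hinth (fun r hr => ?_)
      exact part1 r (Set.mem_Ici.2 hr.1)
    rw [heq, mul_zero, zero_add] at hmono_int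
    exact hmono_int
  have hlog_tendsto : Filter.Tendsto (fun t => Real.log (a * t + b) / a - Real.log b / a)
      Filter.atTop Filter.atTop := by
    apply Filter.tendsto_atTop_add_const_right
    apply Filter.Tendsto.atTop_div_const ha
    apply Real.tendsto_log_atTop.comp
    apply Filter.tendsto_atTop_add_const_right
    exact Filter.Tendsto.const_mul_atTop ha Filter.tendsto_id
  refine Filter.tendsto_atTop_mono' Filter.atTop ?_ hlog_tendsto
  filter_upwards [Filter.eventually_ge_atTop (0:ℝ)] with t ht
  exact key t (Set.mem_Ici.2 ht)
end

section
/- Fix n ≥ 1 and real ρ with 6 + 2n - 6nρ > 0. Let a > 0, d > 0, and set c = (6+2n-6nρ)·d/a². Then g_j(t) = a(1+ct)^{3(1-2nρ)/(6+2n-6nρ)} for 1 ≤ j ≤ 4n and h_k(t) = d(1+ct)^{-n(1+3ρ)/(3+n-3nρ)} for k = 1,2,3 solve the quaternionic Ricci-Bourguignon flow system on [0,∞). -/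
lemma aux_deriv_rpow (K c pexp t : ℝ) (hx : (1 : ℝ) + c * t ≠ 0) :
    HasDerivAt (fun s : ℝ => K * (1 + c * s) ^ pexp)
      (K * (pexp * (1 + c * t) ^ (pexp - 1) * c)) t := by
  have h1 : HasDerivAt (fun s : ℝ => 1 + c * s) c t := by
    simpa using ((hasDerivAt_id t).const_mul c).const_add 1
  have h2 := (Real.hasDerivAt_rpow_const (x := 1 + c * t) (p := pexp) (Or.inl hx)).comp t h1
  simpa [Function.comp, mul_assoc] using h2.const_mul K

/-- The explicit power-law family solves the quaternionic Ricci-Bourguignon flow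
system on `Q_n`. -/
theorem quaternion_RB_explicit_solution (n : ℕ) (hn : 1 ≤ n) (ρ : ℝ)
    (hnρ : (0 : ℝ) < 6 + 2 * n - 6 * n * ρ)
    (a d : ℝ) (ha : 0 < a) (hd : 0 < d)
    (c : ℝ) (hc : c = (6 + 2 * n - 6 * n * ρ) * d / a ^ 2)
    (g : ℕ → ℝ → ℝ) (h1 h2 h3 : ℝ → ℝ) (S1 S2 S3 S' : ℝ → ℝ)
    (hg : ∀ j ∈ Finset.Icc 1 (4 * n), ∀ t,
      g j t = a * (1 + c * t) ^ (3 * (1 - 2 * n * ρ) / (6 + 2 * n - 6 * n * ρ)))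
    (hh1 : ∀ t, h1 t = d * (1 + c * t) ^ (-(n * (1 + 3 * ρ)) / (3 + n - 3 * n * ρ)))
    (hh2 : ∀ t, h2 t = d * (1 + c * t) ^ (-(n * (1 + 3 * ρ)) / (3 + n - 3 * n * ρ)))
    (hh3 : ∀ t, h3 t = d * (1 + c * t) ^ (-(n * (1 + 3 * ρ)) / (3 + n - 3 * n * ρ)))
    (hS1 : ∀ t, S1 t = ∑ i ∈ Finset.Icc 1 n,
      (1 / (g i t * g (n + i) t) + 1 / (g (2*n + i) t * g (3*n + i) t)))
    (hS2 : ∀ t, S2 t = ∑ i ∈ Finset.Icc 1 n,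
      (1 / (g i t * g (3*n + i) t) + 1 / (g (n + i) t * g (2*n + i) t)))
    (hS3 : ∀ t, S3 t = ∑ i ∈ Finset.Icc 1 n,
      (1 / (g i t * g (2*n + i) t) + 1 / (g (n + i) t * g (3*n + i) t)))
    (hS' : ∀ t, S' t = h1 t * S1 t + h2 t * S2 t + h3 t * S3 t) :
    (∀ i ∈ Finset.Icc 1 n, ∀ t ∈ Set.Ici (0 : ℝ),
      HasDerivAt (g i)
        (h1 t / g (n + i) t + h3 t / g (2*n + i) t + h2 t / g (3*n + i) t
          - ρ * g i t * S' t) t ∧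
      HasDerivAt (g (n + i))
        (h1 t / g i t + h2 t / g (2*n + i) t + h3 t / g (3*n + i) t
          - ρ * g (n + i) t * S' t) t ∧
      HasDerivAt (g (2*n + i))
        (h3 t / g i t + h2 t / g (n + i) t + h1 t / g (3*n + i) t
          - ρ * g (2*n + i) t * S' t) t ∧
      HasDerivAt (g (3*n + i))
        (h2 t / g i t + h3 t / g (n + i) t + h1 t / g (2*n + i) t
          - ρ * g (3*n + i) t * S' t) t) ∧
    (∀ t ∈ Set.Ici (0 : ℝ),
      HasDerivAt h1 (-(h1 t) ^ 2 * S1 t - ρ * h1 t * S' t) t ∧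
      HasDerivAt h2 (-(h2 t) ^ 2 * S2 t - ρ * h2 t * S' t) t ∧
      HasDerivAt h3 (-(h3 t) ^ 2 * S3 t - ρ * h3 t * S' t) t) := by
  set p : ℝ := 3 * (1 - 2 * n * ρ) / (6 + 2 * n - 6 * n * ρ) with hp
  set q : ℝ := -(n * (1 + 3 * ρ)) / (3 + n - 3 * n * ρ) with hq
  have hD : (6 : ℝ) + 2 * n - 6 * n * ρ ≠ 0 := ne_of_gt hnρ
  have hE3 : (0 : ℝ) < 3 + n - 3 * n * ρ := by linarith
  have hE : (3 : ℝ) + n - 3 * n * ρ ≠ 0 := ne_of_gt hE3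
  have hD' : (6 : ℝ) + n * 2 - n * ρ * 6 ≠ 0 := by convert hD using 1; ring
  have hE' : (3 : ℝ) + n - n * 3 * ρ ≠ 0 := by convert hE using 1; ring
  have hD'' : (6 : ℝ) + n * 2 - ρ * n * 6 ≠ 0 := by convert hD using 1; ring
  have hE'' : (3 : ℝ) + n - n * ρ * 3 ≠ 0 := by convert hE using 1; ring
  have hpq : q = 2 * p - 1 := by
    rw [hp, hq]; field_simp; ring
  have hc0 : 0 < c := by
    rw [hc]; exact div_pos (mul_pos hnρ hd) (pow_pos ha 2)
  -- collapsed sums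
  have key1 : ∀ t : ℝ, S1 t = (n : ℝ) * (2 / (a * (1 + c * t) ^ p) ^ 2) := by
    intro t
    rw [hS1, Finset.sum_congr rfl (g := fun _ => 2 / (a * (1 + c * t) ^ p) ^ 2)
      (fun i hi => by
        obtain ⟨hi1, hi2⟩ := Finset.mem_Icc.mp hi
        rw [hg i (Finset.mem_Icc.mpr ⟨by omega, by omega⟩),
          hg (n + i) (Finset.mem_Icc.mpr ⟨by omega, by omega⟩),
          hg (2 * n + i) (Finset.mem_Icc.mpr ⟨by omega, by omega⟩),
          hg (3 * n + i) (Finset.mem_Icc.mpr ⟨by omega, by omega⟩)]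
        ring)]
    rw [Finset.sum_const, Nat.card_Icc, nsmul_eq_mul]
    simp
  have key2 : ∀ t : ℝ, S2 t = (n : ℝ) * (2 / (a * (1 + c * t) ^ p) ^ 2) := by
    intro t
    rw [hS2, Finset.sum_congr rfl (g := fun _ => 2 / (a * (1 + c * t) ^ p) ^ 2)
      (fun i hi => by
        obtain ⟨hi1, hi2⟩ := Finset.mem_Icc.mp hi
        rw [hg i (Finset.mem_Icc.mpr ⟨by omega, by omega⟩),
          hg (n + i) (Finset.mem_Icc.mpr ⟨by omega, by omega⟩),
          hg (2 * n + i) (Finset.mem_Icc.mpr ⟨by omega, by omega⟩),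
          hg (3 * n + i) (Finset.mem_Icc.mpr ⟨by omega, by omega⟩)]
        ring)]
    rw [Finset.sum_const, Nat.card_Icc, nsmul_eq_mul]
    simp
  have key3 : ∀ t : ℝ, S3 t = (n : ℝ) * (2 / (a * (1 + c * t) ^ p) ^ 2) := by
    intro t
    rw [hS3, Finset.sum_congr rfl (g := fun _ => 2 / (a * (1 + c * t) ^ p) ^ 2)
      (fun i hi => by
        obtain ⟨hi1, hi2⟩ := Finset.mem_Icc.mp hi
        rw [hg i (Finset.mem_Icc.mpr ⟨by omega, by omega⟩),
          hg (n + i) (Finset.mem_Icc.mpr ⟨by omega, by omega⟩),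
          hg (2 * n + i) (Finset.mem_Icc.mpr ⟨by omega, by omega⟩),
          hg (3 * n + i) (Finset.mem_Icc.mpr ⟨by omega, by omega⟩)]
        ring)]
    rw [Finset.sum_const, Nat.card_Icc, nsmul_eq_mul]
    simp
  constructor
  · intro i hi t ht
    obtain ⟨hi1, hi2⟩ := Finset.mem_Icc.mp hi
    have ht0 : (0 : ℝ) ≤ t := ht
    have hx : (0 : ℝ) < 1 + c * t := by nlinarith [mul_nonneg hc0.le ht0]
    have hX0 : (0 : ℝ) < (1 + c * t) ^ p := Real.rpow_pos_of_pos hx _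
    have hY0 : (0 : ℝ) < (1 + c * t) ^ (p - 1) := Real.rpow_pos_of_pos hx _
    have hxq : (1 + c * t) ^ q = (1 + c * t) ^ (p - 1) * (1 + c * t) ^ p := by
      rw [← Real.rpow_add hx]; congr 1; linarith
    have gderiv : ∀ j ∈ Finset.Icc 1 (4 * n),
        HasDerivAt (g j) (a * (p * (1 + c * t) ^ (p - 1) * c)) t := fun j hj =>
      (aux_deriv_rpow a c p t hx.ne').congr_of_eventuallyEq
        (Filter.Eventually.of_forall fun s => hg j hj s)
    have core : ∀ j₁ ∈ Finset.Icc 1 (4 * n), ∀ j₂ ∈ Finset.Icc 1 (4 * n),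
        ∀ j₃ ∈ Finset.Icc 1 (4 * n), ∀ j₄ ∈ Finset.Icc 1 (4 * n),
        d * (1 + c * t) ^ q / g j₂ t + d * (1 + c * t) ^ q / g j₃ t
          + d * (1 + c * t) ^ q / g j₄ t - ρ * g j₁ t * S' t
          = a * (p * (1 + c * t) ^ (p - 1) * c) := by
      intro j₁ m₁ j₂ m₂ j₃ m₃ j₄ m₄
      rw [hg j₁ m₁ t, hg j₂ m₂ t, hg j₃ m₃ t, hg j₄ m₄ t, hS' t, hh1 t, hh2 t, hh3 t,
        key1 t, key2 t, key3 t, hxq]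
      set X := (1 + c * t) ^ p with hX
      set Y := (1 + c * t) ^ (p - 1) with hY
      rw [hp, hc]
      field_simp
      ring
    have m1 : i ∈ Finset.Icc 1 (4 * n) := Finset.mem_Icc.mpr ⟨by omega, by omega⟩
    have m2 : n + i ∈ Finset.Icc 1 (4 * n) := Finset.mem_Icc.mpr ⟨by omega, by omega⟩
    have m3 : 2 * n + i ∈ Finset.Icc 1 (4 * n) := Finset.mem_Icc.mpr ⟨by omega, by omega⟩
    have m4 : 3 * n + i ∈ Finset.Icc 1 (4 * n) := Finset.mem_Icc.mpr ⟨by omega, by omega⟩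
    refine ⟨?_, ?_, ?_, ?_⟩
    · convert gderiv i m1 using 1
      rw [hh1 t, hh2 t, hh3 t]
      exact core i m1 (n + i) m2 (2 * n + i) m3 (3 * n + i) m4
    · convert gderiv (n + i) m2 using 1
      rw [hh1 t, hh2 t, hh3 t]
      exact core (n + i) m2 i m1 (2 * n + i) m3 (3 * n + i) m4
    · convert gderiv (2 * n + i) m3 using 1
      rw [hh1 t, hh2 t, hh3 t]
      exact core (2 * n + i) m3 i m1 (n + i) m2 (3 * n + i) m4
    · convert gderiv (3 * n + i) m4 using 1
      rw [hh1 t, hh2 t, hh3 t]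
      exact core (3 * n + i) m4 i m1 (n + i) m2 (2 * n + i) m3
  · intro t ht
    have ht0 : (0 : ℝ) ≤ t := ht
    have hx : (0 : ℝ) < 1 + c * t := by nlinarith [mul_nonneg hc0.le ht0]
    have hX0 : (0 : ℝ) < (1 + c * t) ^ p := Real.rpow_pos_of_pos hx _
    have hZ0 : (0 : ℝ) < (1 + c * t) ^ q := Real.rpow_pos_of_pos hx _
    have hxq1 : (1 + c * t) ^ (q - 1)
        = (1 + c * t) ^ q * (1 + c * t) ^ q / ((1 + c * t) ^ p * (1 + c * t) ^ p) := by
      rw [eq_div_iff (by positivity), ← Real.rpow_add hx, ← Real.rpow_add hx,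
        ← Real.rpow_add hx]
      congr 1; linarith
    have hderiv1 : HasDerivAt h1 (d * (q * (1 + c * t) ^ (q - 1) * c)) t :=
      (aux_deriv_rpow d c q t hx.ne').congr_of_eventuallyEq
        (Filter.Eventually.of_forall fun s => hh1 s)
    have hderiv2 : HasDerivAt h2 (d * (q * (1 + c * t) ^ (q - 1) * c)) t :=
      (aux_deriv_rpow d c q t hx.ne').congr_of_eventuallyEq
        (Filter.Eventually.of_forall fun s => hh2 s)
    have hderiv3 : HasDerivAt h3 (d * (q * (1 + c * t) ^ (q - 1) * c)) t :=
      (aux_deriv_rpow d c q t hx.ne').congr_of_eventuallyEq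
        (Filter.Eventually.of_forall fun s => hh3 s)
    have core : -(d * (1 + c * t) ^ q) ^ 2 * ((n : ℝ) * (2 / (a * (1 + c * t) ^ p) ^ 2))
        - ρ * (d * (1 + c * t) ^ q)
            * (d * (1 + c * t) ^ q * ((n : ℝ) * (2 / (a * (1 + c * t) ^ p) ^ 2))
              + d * (1 + c * t) ^ q * ((n : ℝ) * (2 / (a * (1 + c * t) ^ p) ^ 2))
              + d * (1 + c * t) ^ q * ((n : ℝ) * (2 / (a * (1 + c * t) ^ p) ^ 2)))
        = d * (q * (1 + c * t) ^ (q - 1) * c) := by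
      rw [hxq1]
      set X := (1 + c * t) ^ p with hX
      set Z := (1 + c * t) ^ q with hZ
      rw [hq, hc]
      field_simp
      ring
    refine ⟨?_, ?_, ?_⟩
    · convert hderiv1 using 1
      rw [hS' t, hh1 t, hh2 t, hh3 t, key1 t, key2 t, key3 t]
      exact core
    · convert hderiv2 using 1
      rw [hS' t, hh1 t, hh2 t, hh3 t, key1 t, key2 t, key3 t]
      exact core
    · convert hderiv3 using 1
      rw [hS' t, hh1 t, hh2 t, hh3 t, key1 t, key2 t, key3 t]
      exact core
end

section
/- With the explicit quaternionic solution g_j(t) = a(1+ct)^{3(1-2nρ)/(6+2n-6nρ)}, h_k(t) = a²(1+ct)^{-n(1+3ρ)/(3+n-3nρ)} where h_k(0) = g_1(0)² = a² and c = 6+2n-6nρ > 0, the quantity h_1(t)/g_1(t)² equals 1/((6+2n-6nρ)t + 1) for all t ≥ 0; in particular for t > 0 it is strictly less than 1. -/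
/-- For the explicit quaternionic solution with `h_k(0) = g_1(0)² = a²` and
`c = 6 + 2n - 6nρ`, the ratio `h₁/g₁²` equals `1/((6+2n-6nρ)t + 1)`, hence is
`< 1` for `t > 0`. -/
theorem quaternion_type_not_preserved (n : ℕ) (hn : 1 ≤ n) (ρ : ℝ)
    (hnρ : (0 : ℝ) < 6 + 2 * n - 6 * n * ρ) (a : ℝ) (ha : 0 < a)
    (c : ℝ) (hc : c = 6 + 2 * n - 6 * n * ρ) :
    ∀ t ∈ Set.Ici (0 : ℝ),
      (a ^ 2 * (1 + c * t) ^ (-(n * (1 + 3 * ρ)) / (3 + n - 3 * n * ρ))) /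
          (a * (1 + c * t) ^ (3 * (1 - 2 * n * ρ) / (6 + 2 * n - 6 * n * ρ))) ^ 2
        = 1 / ((6 + 2 * n - 6 * n * ρ) * t + 1) ∧
      (0 < t →
        (a ^ 2 * (1 + c * t) ^ (-(n * (1 + 3 * ρ)) / (3 + n - 3 * n * ρ))) /
            (a * (1 + c * t) ^ (3 * (1 - 2 * n * ρ) / (6 + 2 * n - 6 * n * ρ))) ^ 2
          < 1) := by
  intro t ht
  have ht0 : 0 ≤ t := ht
  have hc0 : 0 < c := hc ▸ hnρ
  have hx : (0 : ℝ) < 1 + c * t := by nlinarith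
  have hD : (3 + (n : ℝ) - 3 * n * ρ) ≠ 0 := by nlinarith
  set p : ℝ := -((n : ℝ) * (1 + 3 * ρ)) / (3 + n - 3 * n * ρ) with hp
  set q : ℝ := 3 * (1 - 2 * (n : ℝ) * ρ) / (6 + 2 * n - 6 * n * ρ) with hq
  have hpq : p - (q + q) = -1 := by
    rw [hp, hq]
    have hD2 : (6 + 2 * (n : ℝ) - 6 * n * ρ) ≠ 0 := hnρ.ne'
    rw [← add_div, div_sub_div _ _ hD hD2, div_eq_iff (mul_ne_zero hD hD2)]
    ring
  have key : a ^ 2 * (1 + c * t) ^ p / (a * (1 + c * t) ^ q) ^ 2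
      = 1 / ((6 + 2 * n - 6 * n * ρ) * t + 1) := by
    have ha2 : a ^ 2 ≠ 0 := pow_ne_zero 2 ha.ne'
    rw [mul_pow, sq ((1 + c * t) ^ q), ← Real.rpow_add hx,
      mul_div_mul_comm, div_self ha2, one_mul, ← Real.rpow_sub hx, hpq,
      Real.rpow_neg_one, hc]
    rw [one_div, inv_inj]
    ring
  refine ⟨key, fun htpos => ?_⟩
  rw [key]
  rw [div_lt_one (by nlinarith)]
  nlinarith
end
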